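/- Let R be a polynomial ring over a field K equipped with a monomial order, and let h_1, ..., h_n be nonzero polynomials in R whose leading terms are pairwise coprime (i.e., gcd(Lt(h_i), Lt(h_j)) = 1 for all i ≠ j). Then h_1, ..., h_n is a regular sequence in R. -/

import Mathlib

/-- The multidegree (exponent of the leading monomial) of a multivariate polynomial
with respect to a monomial order. -/
noncomputable def MonomialOrder.degOf {σ : Type*} (m : MonomialOrder σ) {K : Type*} [Field K]
    (f : MvPolynomial σ K) : σ →₀ ℕ :=
  m.toSyn.symm (f.support.sup fun d => m.toSyn d)

namespace MonomialOrder
open MvPolynomial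
variable {σ : Type*} (m : MonomialOrder σ) {K : Type*} [Field K]

lemma toSyn_degOf (f : MvPolynomial σ K) :
    m.toSyn (m.degOf f) = f.support.sup fun d => m.toSyn d := by
  simp [degOf]

@[simp] lemma degOf_zero : m.degOf (0 : MvPolynomial σ K) = 0 := by
  simp [degOf]

lemma le_toSyn_degOf {f : MvPolynomial σ K} {d : σ →₀ ℕ} (h : f.coeff d ≠ 0) :
    m.toSyn d ≤ m.toSyn (m.degOf f) := by
  rw [toSyn_degOf]
  exact Finset.le_sup (f := fun d => m.toSyn d) (mem_support_iff.mpr h)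

lemma coeff_degOf_ne_zero {f : MvPolynomial σ K} (h : f ≠ 0) :
    f.coeff (m.degOf f) ≠ 0 := by
  have hs : f.support.Nonempty := support_nonempty.mpr h
  obtain ⟨d, hd, hde⟩ := Finset.exists_mem_eq_sup f.support hs (fun d => m.toSyn d)
  have : m.degOf f = d := by
    rw [degOf, hde]; exact m.toSyn.symm_apply_apply d
  rw [this]
  exact mem_support_iff.mp hd

lemma toSyn_degOf_le {f : MvPolynomial σ K} {δ : m.syn}
    (h : ∀ d, f.coeff d ≠ 0 → m.toSyn d ≤ δ) : m.toSyn (m.degOf f) ≤ δ := by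
  rcases eq_or_ne f 0 with rfl | hf
  · simpa using (m.bot_eq_zero ▸ bot_le : (0:m.syn) ≤ δ)
  · exact h _ (m.coeff_degOf_ne_zero hf)

lemma toSyn_degOf_lt {f : MvPolynomial σ K} {δ : m.syn} (hδ : 0 < δ)
    (h : ∀ d, f.coeff d ≠ 0 → m.toSyn d < δ) : m.toSyn (m.degOf f) < δ := by
  rcases eq_or_ne f 0 with rfl | hf
  · simpa using hδ
  · exact h _ (m.coeff_degOf_ne_zero hf)

lemma coeff_eq_zero_of_lt_degOf {f : MvPolynomial σ K} {d : σ →₀ ℕ}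
    (h : m.toSyn (m.degOf f) < m.toSyn d) : f.coeff d = 0 := by
  by_contra hc
  exact absurd (m.le_toSyn_degOf hc) (not_le.mpr h)

lemma coeff_mul_degOf (f g : MvPolynomial σ K) :
    (f * g).coeff (m.degOf f + m.degOf g) =
      f.coeff (m.degOf f) * g.coeff (m.degOf g) := by
  classical
  rw [coeff_mul]
  apply Finset.sum_eq_single (m.degOf f, m.degOf g)
  · rintro ⟨u, v⟩ huv hne
    rw [Finset.HasAntidiagonal.mem_antidiagonal] at huv
    by_contra hc
    have hu : f.coeff u ≠ 0 := fun h => hc (by simp [h])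
    have hv : g.coeff v ≠ 0 := fun h => hc (by simp [h])
    have h1 := m.le_toSyn_degOf hu
    have h2 := m.le_toSyn_degOf hv
    have hsum : m.toSyn u + m.toSyn v = m.toSyn (m.degOf f) + m.toSyn (m.degOf g) := by
      rw [← map_add, ← map_add, huv]
    have hu' : m.toSyn u = m.toSyn (m.degOf f) := by
      by_contra hne'
      have hlt : m.toSyn u < m.toSyn (m.degOf f) := lt_of_le_of_ne h1 hne'
      have := add_lt_add_of_lt_of_le hlt h2
      rw [hsum] at this
      exact lt_irrefl _ this
    have hv' : m.toSyn v = m.toSyn (m.degOf g) := by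
      have := hsum
      rw [hu'] at this
      exact add_left_cancel this
    exact hne (Prod.ext (m.toSyn.injective hu') (m.toSyn.injective hv'))
  · intro hmem
    exfalso
    exact hmem (Finset.HasAntidiagonal.mem_antidiagonal.mpr rfl)

lemma degOf_mul {f g : MvPolynomial σ K} (hf : f ≠ 0) (hg : g ≠ 0) :
    m.degOf (f * g) = m.degOf f + m.degOf g := by
  classical
  have hc : (f * g).coeff (m.degOf f + m.degOf g) ≠ 0 := by
    rw [m.coeff_mul_degOf]
    exact mul_ne_zero (m.coeff_degOf_ne_zero hf) (m.coeff_degOf_ne_zero hg)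
  have h1 : m.toSyn (m.degOf f + m.degOf g) ≤ m.toSyn (m.degOf (f * g)) :=
    m.le_toSyn_degOf hc
  have h2 : m.toSyn (m.degOf (f * g)) ≤ m.toSyn (m.degOf f + m.degOf g) := by
    apply m.toSyn_degOf_le
    intro d hd
    rw [coeff_mul] at hd
    obtain ⟨⟨u, v⟩, huv, hne⟩ := Finset.exists_ne_zero_of_sum_ne_zero hd
    rw [Finset.HasAntidiagonal.mem_antidiagonal] at huv
    have hu : f.coeff u ≠ 0 := fun h => hne (by simp [h])
    have hv : g.coeff v ≠ 0 := fun h => hne (by simp [h])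
    calc m.toSyn d = m.toSyn u + m.toSyn v := by rw [← map_add, huv]
    _ ≤ _ := by rw [map_add]; exact add_le_add (m.le_toSyn_degOf hu) (m.le_toSyn_degOf hv)
  exact m.toSyn.injective (le_antisymm h2 h1)

lemma toSyn_degOf_mul_le (f g : MvPolynomial σ K) :
    m.toSyn (m.degOf (f * g)) ≤ m.toSyn (m.degOf f) + m.toSyn (m.degOf g) := by
  rcases eq_or_ne f 0 with rfl | hf
  · simp
  rcases eq_or_ne g 0 with rfl | hg
  · simp
  rw [m.degOf_mul hf hg, map_add]

lemma degOf_monomial {a : σ →₀ ℕ} {c : K} (hc : c ≠ 0) :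
    m.degOf (monomial a c) = a := by
  classical
  rw [degOf, support_monomial, if_neg hc]
  simp

lemma toSyn_degOf_sum_le {ι : Type*} {t : Finset ι} {f : ι → MvPolynomial σ K} {δ : m.syn}
    (h : ∀ i ∈ t, m.toSyn (m.degOf (f i)) ≤ δ) :
    m.toSyn (m.degOf (∑ i ∈ t, f i)) ≤ δ := by
  apply m.toSyn_degOf_le
  intro d hd
  rw [MvPolynomial.coeff_sum] at hd
  obtain ⟨i, hi, hne⟩ := Finset.exists_ne_zero_of_sum_ne_zero hd
  exact le_trans (m.le_toSyn_degOf hne) (h i hi)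

lemma toSyn_degOf_sum_lt {ι : Type*} {t : Finset ι} {f : ι → MvPolynomial σ K} {δ : m.syn}
    (hδ : 0 < δ) (h : ∀ i ∈ t, m.toSyn (m.degOf (f i)) < δ) :
    m.toSyn (m.degOf (∑ i ∈ t, f i)) < δ := by
  apply m.toSyn_degOf_lt hδ
  intro d hd
  rw [MvPolynomial.coeff_sum] at hd
  obtain ⟨i, hi, hne⟩ := Finset.exists_ne_zero_of_sum_ne_zero hd
  exact lt_of_le_of_lt (m.le_toSyn_degOf hne) (h i hi)

/-- coefficients of `f` minus its leading term are strictly below the degree. -/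
lemma coeff_sub_leading {f : MvPolynomial σ K} {d : σ →₀ ℕ}
    (hd : (f - monomial (m.degOf f) (f.coeff (m.degOf f))).coeff d ≠ 0) :
    m.toSyn d < m.toSyn (m.degOf f) := by
  classical
  rw [MvPolynomial.coeff_sub, coeff_monomial] at hd
  by_cases he : m.degOf f = d
  · rw [if_pos he, he, sub_self] at hd
    exact absurd rfl hd
  · rw [if_neg he, sub_zero] at hd
    exact lt_of_le_of_ne (m.le_toSyn_degOf hd) fun h => he (m.toSyn.injective h.symm)

lemma toSyn_degOf_add_le' {f g : MvPolynomial σ K} {δ : m.syn}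
    (h1 : m.toSyn (m.degOf f) ≤ δ) (h2 : m.toSyn (m.degOf g) ≤ δ) :
    m.toSyn (m.degOf (f + g)) ≤ δ := by
  apply m.toSyn_degOf_le
  intro d hd
  rw [MvPolynomial.coeff_add] at hd
  rcases (by by_contra hc; push_neg at hc; rw [hc.1, hc.2, add_zero] at hd; exact hd rfl :
      f.coeff d ≠ 0 ∨ g.coeff d ≠ 0) with hx | hx
  · exact le_trans (m.le_toSyn_degOf hx) h1
  · exact le_trans (m.le_toSyn_degOf hx) h2

lemma toSyn_degOf_add_lt {f g : MvPolynomial σ K} {δ : m.syn} (hδ : 0 < δ)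
    (h1 : m.toSyn (m.degOf f) < δ) (h2 : m.toSyn (m.degOf g) < δ) :
    m.toSyn (m.degOf (f + g)) < δ := by
  apply m.toSyn_degOf_lt hδ
  intro d hd
  rw [MvPolynomial.coeff_add] at hd
  rcases (by by_contra hc; push_neg at hc; rw [hc.1, hc.2, add_zero] at hd; exact hd rfl :
      f.coeff d ≠ 0 ∨ g.coeff d ≠ 0) with hx | hx
  · exact lt_of_le_of_lt (m.le_toSyn_degOf hx) h1
  · exact lt_of_le_of_lt (m.le_toSyn_degOf hx) h2

end MonomialOrder

/-- The leading term `Lt(f)` of a multivariate polynomial with respect to a monomial order. -/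
noncomputable def MonomialOrder.leadingTermOf {σ : Type*} (m : MonomialOrder σ) {K : Type*}
    [Field K] (f : MvPolynomial σ K) : MvPolynomial σ K :=
  MvPolynomial.monomial (m.degOf f) (f.coeff (m.degOf f))

namespace MonomialOrder
open MvPolynomial
variable {σ : Type*} (m : MonomialOrder σ) {K : Type*} [Field K]

lemma dvd_leadingTerm_of_pos {f : MvPolynomial σ K} (hf : f ≠ 0) {x : σ}
    (hx : 0 < m.degOf f x) : X x ∣ m.leadingTermOf f := by
  refine ⟨monomial (m.degOf f - Finsupp.single x 1) (f.coeff (m.degOf f)), ?_⟩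
  rw [leadingTermOf, X, monomial_mul, one_mul]
  congr 1
  rw [add_tsub_cancel_of_le]
  rwa [Finsupp.single_le_iff]

lemma degOf_neg (f : MvPolynomial σ K) : m.degOf (-f) = m.degOf f := by
  simp [degOf, MvPolynomial.support_neg]

lemma toSyn_degOf_sub_leadingTerm_lt {f : MvPolynomial σ K}
    (h0 : f - m.leadingTermOf f ≠ 0) :
    m.toSyn (m.degOf (f - m.leadingTermOf f)) < m.toSyn (m.degOf f) := by
  apply m.coeff_sub_leading (d := m.degOf (f - m.leadingTermOf f))
  rw [leadingTermOf] at h0 ⊢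
  exact m.coeff_degOf_ne_zero h0

lemma degOf_eq_zero_or_of_isRelPrime {f g : MvPolynomial σ K} (hf : f ≠ 0) (hg : g ≠ 0)
    (hrp : IsRelPrime (m.leadingTermOf f) (m.leadingTermOf g)) (x : σ) :
    m.degOf f x = 0 ∨ m.degOf g x = 0 := by
  by_contra hc
  push_neg at hc
  have h1 := m.dvd_leadingTerm_of_pos hf (Nat.pos_of_ne_zero hc.1)
  have h2 := m.dvd_leadingTerm_of_pos hg (Nat.pos_of_ne_zero hc.2)
  have hu : IsUnit (X x : MvPolynomial σ K) := hrp h1 h2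
  have := hu.map (constantCoeff (σ := σ) (R := K))
  rw [constantCoeff_X] at this
  exact not_isUnit_zero this

end MonomialOrder

namespace MonomialOrder
open MvPolynomial
variable {σ : Type*} (m : MonomialOrder σ) {K : Type*} [Field K]

lemma exists_degOf_le {ι : Type*} [Fintype ι] (f : ι → MvPolynomial σ K)
    (hf : ∀ i, f i ≠ 0)
    (hdisj : ∀ i j, i ≠ j → ∀ x, m.degOf (f i) x = 0 ∨ m.degOf (f j) x = 0)
    (δ : m.syn) :
    ∀ (c : ι → MvPolynomial σ K) (p : MvPolynomial σ K),
      p = ∑ i, c i * f i →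
      (∀ i, m.toSyn (m.degOf (c i * f i)) ≤ δ) →
      p ≠ 0 → ∃ i, m.degOf (f i) ≤ m.degOf p := by
  classical
  induction δ using WellFoundedLT.induction with
  | _ δ IH => ?_
  intro c p hrep hbound hp
  set e : σ →₀ ℕ := m.toSyn.symm δ with he_def
  have he : m.toSyn e = δ := m.toSyn.apply_symm_apply δ
  -- coefficients of p are bounded by δ
  have hpcoeff : ∀ d, p.coeff d ≠ 0 → m.toSyn d ≤ δ := by
    intro d hd
    rw [hrep, coeff_sum] at hd
    obtain ⟨i, _, hne⟩ := Finset.exists_ne_zero_of_sum_ne_zero hd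
    exact le_trans (m.le_toSyn_degOf hne) (hbound i)
  by_cases hpe : p.coeff e ≠ 0
  · -- the top coefficient survives
    have hdegp : m.degOf p = e := by
      apply m.toSyn.injective
      rw [he]
      exact le_antisymm (m.toSyn_degOf_le hpcoeff) (he ▸ m.le_toSyn_degOf hpe)
    have : (∑ i, c i * f i).coeff e ≠ 0 := by rwa [← hrep]
    rw [coeff_sum] at this
    obtain ⟨i, _, hne⟩ := Finset.exists_ne_zero_of_sum_ne_zero this
    have hci : c i ≠ 0 := by intro hci0; rw [hci0, zero_mul] at hne; simp at hne
    have hdeq : m.degOf (c i * f i) = e := by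
      apply m.toSyn.injective
      refine le_antisymm (he ▸ hbound i) (m.le_toSyn_degOf hne)
    rw [m.degOf_mul hci (hf i)] at hdeq
    refine ⟨i, ?_⟩
    rw [hdegp, ← hdeq]
    exact le_add_self
  · push_neg at hpe
    -- δ is positive
    have hδne : δ ≠ 0 := by
      rintro rfl
      apply hp
      ext d
      rcases eq_or_ne d e with rfl | hd
      · simpa using hpe
      · by_contra hc
        have h1 := hpcoeff d (by simpa using hc)
        have : d = e := m.toSyn.injective (by
          rw [he]
          exact le_antisymm h1 (m.bot_eq_zero ▸ bot_le))
        exact hd this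
    have hδpos : 0 < δ := lt_of_le_of_ne (m.bot_eq_zero ▸ bot_le) (Ne.symm hδne)
    set T : Finset ι :=
      Finset.univ.filter (fun i => c i ≠ 0 ∧ m.degOf (c i) + m.degOf (f i) = e) with hT_def
    have hmemT : ∀ i, i ∈ T ↔ c i ≠ 0 ∧ m.degOf (c i) + m.degOf (f i) = e := by
      intro i; simp [hT_def]
    -- terms outside T have degree < δ
    have key1 : ∀ i ∉ T, m.toSyn (m.degOf (c i * f i)) < δ := by
      intro i hi
      rcases eq_or_ne (c i) 0 with hci | hci
      · rw [hci, zero_mul, degOf_zero, map_zero]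
        exact hδpos
      · have hne : m.degOf (c i) + m.degOf (f i) ≠ e := by
          intro hcon; exact hi ((hmemT i).mpr ⟨hci, hcon⟩)
        rw [m.degOf_mul hci (hf i)]
        refine lt_of_le_of_ne ?_ (fun hcon => hne (by
          apply m.toSyn.injective; rw [he]; exact hcon))
        rw [← m.degOf_mul hci (hf i)]
        exact hbound i
    have key2 : ∀ i ∉ T, (c i * f i).coeff e = 0 := by
      intro i hi
      apply m.coeff_eq_zero_of_lt_degOf
      rw [he]
      exact key1 i hi
    -- the top slice sums to zero
    have hsumT : ∑ i ∈ T, (c i).coeff (m.degOf (c i)) * (f i).coeff (m.degOf (f i)) = 0 := by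
      have h0 : (0 : K) = ∑ i, (c i * f i).coeff e := by
        rw [← coeff_sum, ← hrep, hpe]
      rw [← Finset.sum_subset (Finset.subset_univ T) (fun i _ hi => key2 i hi)] at h0
      calc ∑ i ∈ T, (c i).coeff (m.degOf (c i)) * (f i).coeff (m.degOf (f i))
          = ∑ i ∈ T, (c i * f i).coeff e := by
            apply Finset.sum_congr rfl
            intro i hi
            obtain ⟨hci, hde⟩ := (hmemT i).mp hi
            rw [← hde, m.coeff_mul_degOf]
        _ = 0 := h0.symm
    by_cases hTe : T = ∅
    · -- T empty: all terms strictly below δ, recurse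
      have hall : ∀ i, m.toSyn (m.degOf (c i * f i)) < δ := fun i =>
        key1 i (by rw [hTe]; exact Finset.notMem_empty i)
      refine IH (Finset.univ.sup fun i => m.toSyn (m.degOf (c i * f i))) ?_ c p hrep
        (fun i => Finset.le_sup (f := fun i => m.toSyn (m.degOf (c i * f i)))
          (Finset.mem_univ i)) hp
      exact (Finset.sup_lt_iff (m.bot_eq_zero ▸ hδpos)).mpr fun i _ => hall i
    · obtain ⟨j, hj⟩ := Finset.nonempty_iff_ne_empty.mpr hTe
      obtain ⟨hcj, hdej⟩ := (hmemT j).mp hj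
      set dj := m.degOf (f j) with hdj
      have hlcj0 : (f j).coeff dj ≠ 0 := m.coeff_degOf_ne_zero (hf j)
      have hdjle : ∀ i ∈ T, i ≠ j → dj ≤ m.degOf (c i) := by
        intro i hi hij
        obtain ⟨hci, hdei⟩ := (hmemT i).mp hi
        intro x
        rcases hdisj j i (fun hcon => hij hcon.symm) x with h0 | h0
        · rw [← hdj] at h0
          simp [h0]
        · have h1 : dj x ≤ e x := by
            rw [← hdej, Finsupp.add_apply]
            exact Nat.le_add_left _ _
          have h2 : e x = m.degOf (c i) x := by
            rw [← hdei, Finsupp.add_apply, h0, add_zero]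
          omega
      set t : ι → MvPolynomial σ K :=
        fun i => monomial (m.degOf (c i)) ((c i).coeff (m.degOf (c i))) with ht
      set u : ι → MvPolynomial σ K :=
        fun i => monomial (m.degOf (c i) - dj) ((c i).coeff (m.degOf (c i)) / (f j).coeff dj)
        with hu
      have hu0 : ∀ i ∈ T, u i ≠ 0 := by
        intro i hi
        obtain ⟨hci, _⟩ := (hmemT i).mp hi
        simp only [hu, Ne, MvPolynomial.monomial_eq_zero]
        exact div_ne_zero (m.coeff_degOf_ne_zero hci) hlcj0
      have hdu : ∀ i ∈ T, m.degOf (u i) = m.degOf (c i) - dj := by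
        intro i hi
        obtain ⟨hci, _⟩ := (hmemT i).mp hi
        exact m.degOf_monomial (div_ne_zero (m.coeff_degOf_ne_zero hci) hlcj0)
      have hut : ∀ i ∈ T, i ≠ j → u i * m.leadingTermOf (f j) = t i := by
        intro i hi hij
        rw [hu, ht, leadingTermOf, monomial_mul, ← hdj,
          tsub_add_cancel_of_le (hdjle i hi hij), div_mul_cancel₀ _ hlcj0]
      set G : ι → MvPolynomial σ K := fun i =>
        if i = j then c j + ∑ i' ∈ T.erase j, u i' * f i'
        else if i ∈ T then (c i - t i) + u i * (m.leadingTermOf (f j) - f j)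
        else c i with hG
      have hGj : G j = c j + ∑ i' ∈ T.erase j, u i' * f i' := by simp [hG]
      have hGmem : ∀ i ∈ T, i ≠ j → G i = (c i - t i) + u i * (m.leadingTermOf (f j) - f j) := by
        intro i hi hij; simp [hG, hij, hi]
      have hGnot : ∀ i, i ∉ T → i ≠ j → G i = c i := by
        intro i hi hij; simp [hG, hij, hi]
      -- the new family still represents p
      have hGrep : p = ∑ i, G i * f i := by
        have hE : ∑ i, (G i * f i - c i * f i) = 0 := by
          rw [← Finset.add_sum_erase _ _ (Finset.mem_univ j)]
          have h1 : G j * f j - c j * f j = ∑ i' ∈ T.erase j, u i' * f i' * f j := by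
            rw [hGj, add_mul, Finset.sum_mul]
            ring
          have h2 : ∀ i ∈ Finset.univ.erase j, G i * f i - c i * f i =
              if i ∈ T then (u i * m.leadingTermOf (f j) - t i - u i * f j) * f i else 0 := by
            intro i hi
            have hij : i ≠ j := (Finset.mem_erase.mp hi).1
            by_cases hiT : i ∈ T
            · rw [if_pos hiT, hGmem i hiT hij]; ring
            · rw [if_neg hiT, hGnot i hiT hij]; ring
          rw [h1, Finset.sum_congr rfl h2, Finset.sum_ite_mem]
          have h3 : Finset.univ.erase j ∩ T = T.erase j := by
            ext i
            simp [Finset.mem_erase, and_comm]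
          rw [h3, ← Finset.sum_add_distrib]
          apply Finset.sum_eq_zero
          intro i hi
          obtain ⟨hij, hiT⟩ := Finset.mem_erase.mp hi
          rw [hut i hiT hij]
          ring
        rw [Finset.sum_sub_distrib] at hE
        rw [hrep]
        exact (sub_eq_zero.mp hE).symm
      -- all new terms have degree strictly below δ
      have hGbound : ∀ i, m.toSyn (m.degOf (G i * f i)) < δ := by
        intro i
        by_cases hij : i = j
        · subst hij
          have hq : G i * f i = c i * f i + ∑ i' ∈ T.erase i, u i' * (f i' * f i) := by
            rw [hGj, add_mul, Finset.sum_mul]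
            congr 1
            apply Finset.sum_congr rfl
            intro i' _
            ring
          have hterm : ∀ i' ∈ T.erase i, m.degOf (u i' * (f i' * f i)) = e := by
            intro i' hi'
            obtain ⟨hij', hi'T⟩ := Finset.mem_erase.mp hi'
            obtain ⟨hci', hdei'⟩ := (hmemT i').mp hi'T
            rw [m.degOf_mul (hu0 i' hi'T) (mul_ne_zero (hf i') (hf i)),
              hdu i' hi'T, m.degOf_mul (hf i') (hf i), ← hdj,
              add_comm (m.degOf (f i')) dj, ← add_assoc,
              tsub_add_cancel_of_le (hdjle i' hi'T hij')]
            exact hdei'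
          have hle : m.toSyn (m.degOf (G i * f i)) ≤ δ := by
            rw [hq]
            apply m.toSyn_degOf_add_le' (hbound i)
            apply m.toSyn_degOf_sum_le
            intro i' hi'
            rw [hterm i' hi', he]
          have hce : (G i * f i).coeff e = 0 := by
            rw [hq, MvPolynomial.coeff_add, MvPolynomial.coeff_sum]
            have hc1 : (c i * f i).coeff e = (c i).coeff (m.degOf (c i)) * (f i).coeff (m.degOf (f i)) := by
              rw [← hdej, m.coeff_mul_degOf]
            have hc2 : ∀ i' ∈ T.erase i,
                (u i' * (f i' * f i)).coeff e
                  = (c i').coeff (m.degOf (c i')) * (f i').coeff (m.degOf (f i')) := by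
              intro i' hi'
              obtain ⟨hij', hi'T⟩ := Finset.mem_erase.mp hi'
              obtain ⟨hci', hdei'⟩ := (hmemT i').mp hi'T
              have hsum' : m.degOf (u i') + m.degOf (f i' * f i) = e := by
                rw [hdu i' hi'T, m.degOf_mul (hf i') (hf i), ← hdj,
                  add_comm (m.degOf (f i')) dj, ← add_assoc,
                  tsub_add_cancel_of_le (hdjle i' hi'T hij')]
                exact hdei'
              rw [← hsum', m.coeff_mul_degOf, hdu i' hi'T, hu]
              simp only [MvPolynomial.coeff_monomial, eq_self_iff_true, if_true]
              rw [m.degOf_mul (hf i') (hf i), m.coeff_mul_degOf, ← hdj]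
              field_simp
            rw [hc1, Finset.sum_congr rfl hc2,
              Finset.add_sum_erase T
                (fun i' => (c i').coeff (m.degOf (c i')) * (f i').coeff (m.degOf (f i'))) hj]
            exact hsumT
          rcases eq_or_ne (G i * f i) 0 with h0 | h0
          · rw [h0, degOf_zero, map_zero]; exact hδpos
          · refine lt_of_le_of_ne hle fun hcon => ?_
            have : m.degOf (G i * f i) = e := m.toSyn.injective (by rw [hcon, he])
            exact m.coeff_degOf_ne_zero h0 (this ▸ hce)
        · by_cases hiT : i ∈ T
          · obtain ⟨hci, hdei⟩ := (hmemT i).mp hiT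
            rw [hGmem i hiT hij, add_mul]
            apply m.toSyn_degOf_add_lt hδpos
            · rcases eq_or_ne (c i - t i) 0 with h0 | h0
              · rw [h0, zero_mul, degOf_zero, map_zero]; exact hδpos
              · rw [m.degOf_mul h0 (hf i), map_add]
                have hlt : m.toSyn (m.degOf (c i - t i)) < m.toSyn (m.degOf (c i)) := by
                  rw [ht] at h0 ⊢
                  exact m.toSyn_degOf_sub_leadingTerm_lt h0
                calc m.toSyn (m.degOf (c i - t i)) + m.toSyn (m.degOf (f i))
                    < m.toSyn (m.degOf (c i)) + m.toSyn (m.degOf (f i)) :=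
                      add_lt_add_of_lt_of_le hlt le_rfl
                  _ = δ := by rw [← map_add, hdei, he]
            · rcases eq_or_ne (m.leadingTermOf (f j) - f j) 0 with h0 | h0
              · rw [h0, mul_zero, zero_mul, degOf_zero, map_zero]; exact hδpos
              · rw [m.degOf_mul (mul_ne_zero (hu0 i hiT) h0) (hf i),
                  m.degOf_mul (hu0 i hiT) h0, map_add, map_add]
                have hlt : m.toSyn (m.degOf (m.leadingTermOf (f j) - f j)) < m.toSyn dj := by
                  have hne' : f j - m.leadingTermOf (f j) ≠ 0 := by
                    intro hcon
                    exact h0 (by rw [← neg_sub, hcon, neg_zero])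
                  have := m.toSyn_degOf_sub_leadingTerm_lt hne'
                  rwa [show m.leadingTermOf (f j) - f j = -(f j - m.leadingTermOf (f j)) by ring,
                    degOf_neg]
                calc m.toSyn (m.degOf (u i)) + m.toSyn (m.degOf (m.leadingTermOf (f j) - f j))
                      + m.toSyn (m.degOf (f i))
                    < m.toSyn (m.degOf (u i)) + m.toSyn dj + m.toSyn (m.degOf (f i)) := by
                      exact add_lt_add_of_lt_of_le (add_lt_add_of_le_of_lt le_rfl hlt) le_rfl
                  _ = δ := by
                      rw [hdu i hiT, ← map_add, ← map_add,
                        tsub_add_cancel_of_le (hdjle i hiT hij), hdei, he]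
          · rw [hGnot i hiT hij]
            exact key1 i hiT
      refine IH (Finset.univ.sup fun i => m.toSyn (m.degOf (G i * f i))) ?_ G p hGrep
        (fun i => Finset.le_sup (f := fun i => m.toSyn (m.degOf (G i * f i)))
          (Finset.mem_univ i)) hp
      exact (Finset.sup_lt_iff (m.bot_eq_zero ▸ hδpos)).mpr fun i _ => hGbound i

end MonomialOrder

namespace MonomialOrder
open MvPolynomial
variable {σ : Type*} (m : MonomialOrder σ) {K : Type*} [Field K]

lemma mem_span_of_mul_mem {ι : Type*} [Fintype ι] (f : ι → MvPolynomial σ K)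
    (hf : ∀ i, f i ≠ 0)
    (hdisj : ∀ i j, i ≠ j → ∀ x, m.degOf (f i) x = 0 ∨ m.degOf (f j) x = 0)
    {b : MvPolynomial σ K} (hb : b ≠ 0)
    (hdisjb : ∀ i, ∀ x, m.degOf (f i) x = 0 ∨ m.degOf b x = 0)
    (g : MvPolynomial σ K) (hmem : g * b ∈ Ideal.span (Set.range f)) :
    g ∈ Ideal.span (Set.range f) := by
  classical
  have H : ∀ δ : m.syn, ∀ g : MvPolynomial σ K, m.toSyn (m.degOf g) = δ →
      g * b ∈ Ideal.span (Set.range f) → g ∈ Ideal.span (Set.range f) := by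
    intro δ
    induction δ using WellFoundedLT.induction with
    | _ δ IH => ?_
    intro g hgd hgb
    rcases eq_or_ne g 0 with rfl | hg0
    · exact Ideal.zero_mem _
    have hp0 : g * b ≠ 0 := mul_ne_zero hg0 hb
    obtain ⟨c, hc⟩ := Ideal.mem_span_range_iff_exists_fun.mp hgb
    obtain ⟨i, hi⟩ := m.exists_degOf_le f hf hdisj
      (Finset.univ.sup fun i => m.toSyn (m.degOf (c i * f i))) c (g * b) hc.symm
      (fun i => Finset.le_sup (f := fun i => m.toSyn (m.degOf (c i * f i)))
        (Finset.mem_univ i)) hp0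
    have hdgb : m.degOf (g * b) = m.degOf g + m.degOf b := m.degOf_mul hg0 hb
    have hle : m.degOf (f i) ≤ m.degOf g := by
      intro x
      rcases hdisjb i x with h0 | h0
      · simp [h0]
      · have h1 := hi x
        rw [hdgb, Finsupp.add_apply, h0, add_zero] at h1
        exact h1
    set q : MvPolynomial σ K :=
      monomial (m.degOf g - m.degOf (f i)) (g.coeff (m.degOf g) / (f i).coeff (m.degOf (f i)))
      with hq_def
    have hlcfi : (f i).coeff (m.degOf (f i)) ≠ 0 := m.coeff_degOf_ne_zero (hf i)
    have hlcg : g.coeff (m.degOf g) ≠ 0 := m.coeff_degOf_ne_zero hg0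
    have hq0 : q ≠ 0 := by
      simp only [hq_def, Ne, MvPolynomial.monomial_eq_zero]
      exact div_ne_zero hlcg hlcfi
    have hqf : m.degOf (q * f i) = m.degOf g := by
      rw [m.degOf_mul hq0 (hf i), hq_def, m.degOf_monomial (div_ne_zero hlcg hlcfi),
        tsub_add_cancel_of_le hle]
    have hqfc : (q * f i).coeff (m.degOf g) = g.coeff (m.degOf g) := by
      have h2 : m.degOf q + m.degOf (f i) = m.degOf g := by
        rw [hq_def, m.degOf_monomial (div_ne_zero hlcg hlcfi), tsub_add_cancel_of_le hle]
      have h3 := m.coeff_mul_degOf q (f i)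
      rw [h2] at h3
      rw [h3, hq_def, m.degOf_monomial (div_ne_zero hlcg hlcfi)]
      simp only [MvPolynomial.coeff_monomial, eq_self_iff_true, if_true]
      exact div_mul_cancel₀ _ hlcfi
    have hfiI : f i ∈ Ideal.span (Set.range f) := Ideal.subset_span ⟨i, rfl⟩
    rcases eq_or_ne (g - q * f i) 0 with hg' | hg'
    · have hgeq : g = q * f i := by
        have := sub_eq_zero.mp hg'
        exact this
      rw [hgeq]
      exact Ideal.mul_mem_left _ _ hfiI
    · have hg'b : (g - q * f i) * b ∈ Ideal.span (Set.range f) := by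
        rw [sub_mul]
        refine Submodule.sub_mem _ hgb ?_
        rw [show q * f i * b = (q * b) * f i by ring]
        exact Ideal.mul_mem_left _ _ hfiI
      have hlt : m.toSyn (m.degOf (g - q * f i)) < δ := by
        have h1 : m.toSyn (m.degOf (g - q * f i)) ≤ δ := by
          apply m.toSyn_degOf_le
          intro d hd
          rw [MvPolynomial.coeff_sub] at hd
          rcases (by by_contra hcon; push_neg at hcon
                     rw [hcon.1, hcon.2, sub_zero] at hd; exact hd rfl :
              g.coeff d ≠ 0 ∨ (q * f i).coeff d ≠ 0) with hx | hx
          · exact hgd ▸ m.le_toSyn_degOf hx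
          · exact le_trans (m.le_toSyn_degOf hx) (by rw [hqf, hgd])
        refine lt_of_le_of_ne h1 fun hcon => ?_
        have hdeq : m.degOf (g - q * f i) = m.degOf g :=
          m.toSyn.injective (by rw [hcon, ← hgd])
        have := m.coeff_degOf_ne_zero hg'
        rw [hdeq, MvPolynomial.coeff_sub, hqfc, sub_self] at this
        exact this rfl
      have hg'I := IH _ hlt (g - q * f i) rfl hg'b
      have : g = (g - q * f i) + q * f i := by ring
      rw [this]
      exact Submodule.add_mem _ hg'I (Ideal.mul_mem_left _ _ hfiI)
  exact H _ g rfl hmem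

end MonomialOrder

/-- If `h 1, …, h n` are nonzero polynomials in `R = K[z_1, …, z_N]` whose leading terms
(with respect to a fixed monomial order) are pairwise coprime, then `h 1, …, h n` is a
regular sequence in `R`. -/
theorem leadingTerms_pairwise_coprime_regular_sequence
    {K : Type*} [Field K] {N n : ℕ} (m : MonomialOrder (Fin N))
    (h : Fin n → MvPolynomial (Fin N) K)
    (hne : ∀ i, h i ≠ 0)
    (hcop : ∀ i j, i ≠ j → IsRelPrime (m.leadingTermOf (h i)) (m.leadingTermOf (h j))) :
    RingTheory.Sequence.IsWeaklyRegular (MvPolynomial (Fin N) K) (List.ofFn h) := by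
  classical
  constructor
  intro i hi
  have hi' : i < n := by simpa using hi
  set k : Fin n := ⟨i, hi'⟩ with hk
  have hIeq : Ideal.ofList ((List.ofFn h).take i) =
      Ideal.span (Set.range fun j : {j : Fin n // j.1 < i} => h j.1) := by
    have hset : {r | r ∈ (List.ofFn h).take i} =
        Set.range (fun j : {j : Fin n // j.1 < i} => h j.1) := by
      ext x
      simp only [Set.mem_setOf_eq, Set.mem_range]
      constructor
      · intro hx
        obtain ⟨idx, hidx, hval⟩ := List.mem_iff_getElem.mp hx
        have hlen : idx < n ∧ idx < i := by
          simp only [List.length_take, List.length_ofFn] at hidx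
          omega
        refine ⟨⟨⟨idx, hlen.1⟩, hlen.2⟩, ?_⟩
        rw [← hval, List.getElem_take, List.getElem_ofFn]
      · rintro ⟨⟨j, hj⟩, rfl⟩
        apply List.mem_iff_getElem.mpr
        refine ⟨j.1, ?_, ?_⟩
        · simp only [List.length_take, List.length_ofFn]
          omega
        · rw [List.getElem_take, List.getElem_ofFn]
    exact congrArg Ideal.span hset
  have hsm : (Ideal.ofList ((List.ofFn h).take i) • ⊤ :
      Submodule (MvPolynomial (Fin N) K) (MvPolynomial (Fin N) K)) =
      (Ideal.ofList ((List.ofFn h).take i) :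
        Submodule (MvPolynomial (Fin N) K) (MvPolynomial (Fin N) K)) := by
    rw [Ideal.smul_eq_mul, Ideal.mul_top]
  have helem : (List.ofFn h)[i]'(by simpa using hi') = h k :=
    by rw [List.getElem_ofFn]
  intro x y hxy
  obtain ⟨x, rfl⟩ := Submodule.Quotient.mk_surjective _ x
  obtain ⟨y, rfl⟩ := Submodule.Quotient.mk_surjective _ y
  dsimp only at hxy
  rw [← Submodule.Quotient.mk_smul, ← Submodule.Quotient.mk_smul] at hxy
  rw [Submodule.Quotient.eq, hsm] at hxy
  rw [Submodule.Quotient.eq, hsm]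
  rw [hIeq] at hxy ⊢
  have hdisj : ∀ (a b : {j : Fin n // j.1 < i}), a ≠ b →
      ∀ z, m.degOf (h a.1) z = 0 ∨ m.degOf (h b.1) z = 0 := by
    intro a b hab
    exact m.degOf_eq_zero_or_of_isRelPrime (hne _) (hne _)
      (hcop _ _ fun hcon => hab (Subtype.ext hcon))
  have hdisjb : ∀ (a : {j : Fin n // j.1 < i}) z,
      m.degOf (h a.1) z = 0 ∨ m.degOf (h k) z = 0 := by
    intro a
    have hak : a.1 ≠ k := by
      intro hcon
      have := a.2
      rw [hcon] at this
      exact absurd this (by simp [hk])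
    exact m.degOf_eq_zero_or_of_isRelPrime (hne _) (hne _) (hcop _ _ hak)
  apply m.mem_span_of_mul_mem _ (fun j => hne _) hdisj (hne k) hdisjb (x - y)
  have hrw : (x - y) * h k = (List.ofFn h)[i]'(by simpa using hi') • x
      - (List.ofFn h)[i]'(by simpa using hi') • y := by
    rw [helem, smul_eq_mul, smul_eq_mul]
    ring
  rw [hrw]
  exact hxy
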